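/- Fix positive integers m and n, a real B ≥ 0, and a function f : ℕⁿ → ℝ with 0 ≤ f(X) ≤ B for all X ∈ ℕⁿ. For p > 0, the series g(p) = Σ_{X ∈ ℕⁿ} f(X)·∏ᵢ₌₁ⁿ e^{−m·p}·(m·p)^{Xᵢ}/Xᵢ! converges absolutely (it is the expectation of f(X₁,…,Xₙ) when X₁,…,Xₙ are i.i.d. Poisson(m·p)). Moreover, g is differentiable at every p > 0, and its derivative g'(p) satisfies p·g'(p) = Σ_{X ∈ ℕⁿ} f(X)·(Σᵢ₌₁ⁿ (Xᵢ − m·p))·∏ᵢ₌₁ⁿ e^{−m·p}·(m·p)^{Xᵢ}/Xᵢ!. -/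

import Mathlib

lemma aux_pi_summable (n : ℕ) (g : ℕ → ℝ) (hg0 : ∀ k, 0 ≤ g k) (hg : Summable g) :
    Summable (fun X : Fin n → ℕ => ∏ i, g (X i)) := by
  induction n with
  | zero => exact .of_finite
  | succ n ih =>
    refine ((Fin.consEquiv fun _ => ℕ).summable_iff).mp ?_
    refine (hg.mul_of_nonneg ih hg0 (fun X => Finset.prod_nonneg fun i _ => hg0 _)).congr ?_
    rintro ⟨k, X⟩
    simp [Fin.consEquiv, Fin.prod_univ_succ]

lemma aux_prod2 (n : ℕ) (t : ℝ) (X : Fin n → ℕ) :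
    ∏ i, t ^ (X i) / (Nat.factorial (X i) : ℝ)
      = t ^ (∑ i, X i) / ∏ i, (Nat.factorial (X i) : ℝ) := by
  rw [Finset.prod_div_distrib, Finset.prod_pow_eq_pow_sum]

lemma aux_sum_le (n : ℕ) (X : Fin n → ℕ) :
    ((∑ i, X i : ℕ) : ℝ) ≤ ∏ i, (2:ℝ) ^ (X i) := by
  rw [Finset.prod_pow_eq_pow_sum]
  have := (Nat.lt_two_pow_self : ∑ i, X i < 2 ^ ∑ i, X i).le
  exact_mod_cast this

lemma aux_prod_eq (n m : ℕ) (q : ℝ) (X : Fin n → ℕ) :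
    ∏ i, Real.exp (-((m : ℝ) * q)) * ((m : ℝ) * q) ^ (X i) / (Nat.factorial (X i) : ℝ)
      = Real.exp (-(((n : ℝ) * m) * q)) * ((m : ℝ) ^ (∑ i, X i) * q ^ (∑ i, X i)) /
          ∏ i, (Nat.factorial (X i) : ℝ) := by
  rw [Finset.prod_div_distrib, Finset.prod_mul_distrib, Finset.prod_const,
    Finset.prod_pow_eq_pow_sum, Finset.card_univ, Fintype.card_fin,
    ← Real.exp_nat_mul, mul_pow]
  rw [show (n:ℝ) * -((m:ℝ)*q) = -((n:ℝ)*m*q) by ring]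

lemma aux_masterS (n : ℕ) (t C : ℝ) (ht : 0 < t) (hC : 0 ≤ C) :
    Summable (fun X : Fin n → ℕ =>
      ((∑ i, (X i : ℝ)) + C) * ∏ i, t ^ (X i) / (Nat.factorial (X i) : ℝ)) := by
  have hpi : Summable (fun X : Fin n → ℕ => ∏ i, (2*t) ^ (X i) / (Nat.factorial (X i) : ℝ)) := by
    have := aux_pi_summable n (fun k => (2*t) ^ k / (Nat.factorial k : ℝ))
      (fun k => by positivity) (Real.summable_pow_div_factorial (2*t))
    exact this
  have hsum : Summable (fun X : Fin n → ℕ =>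
      (1 + C) * ∏ i, (2*t) ^ (X i) / (Nat.factorial (X i) : ℝ)) := hpi.mul_left _
  refine Summable.of_nonneg_of_le (fun X => ?_) (fun X => ?_) hsum
  · have h1 : 0 ≤ (∑ i, (X i : ℝ)) + C := by positivity
    have h2 : 0 ≤ ∏ i, t ^ (X i) / (Nat.factorial (X i) : ℝ) := by positivity
    exact mul_nonneg h1 h2
  · have hP : ((∑ i, (X i : ℝ)) + C) ≤ (1 + C) * ∏ i, (2:ℝ) ^ (X i) := by
      have h1 : (∑ i, (X i : ℝ)) ≤ ∏ i, (2:ℝ) ^ (X i) := by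
        have := aux_sum_le n X
        push_cast at this
        exact this
      have h2 : (1:ℝ) ≤ ∏ i, (2:ℝ) ^ (X i) := by
        rw [Finset.prod_pow_eq_pow_sum]
        exact one_le_pow₀ (by norm_num : (1:ℝ) ≤ 2)
      nlinarith [h1, h2]
    have hT : 0 ≤ ∏ i, t ^ (X i) / (Nat.factorial (X i) : ℝ) := by positivity
    calc ((∑ i, (X i : ℝ)) + C) * ∏ i, t ^ (X i) / (Nat.factorial (X i) : ℝ)
        ≤ ((1 + C) * ∏ i, (2:ℝ) ^ (X i)) * ∏ i, t ^ (X i) / (Nat.factorial (X i) : ℝ) :=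
          mul_le_mul_of_nonneg_right hP hT
      _ = (1 + C) * ∏ i, (2*t) ^ (X i) / (Nat.factorial (X i) : ℝ) := by
          rw [mul_assoc, ← Finset.prod_mul_distrib]
          congr 1
          exact Finset.prod_congr rfl fun i _ => by rw [mul_pow]; ring

lemma aux_pow_step (S : ℕ) (x : ℝ) : (S:ℝ) * x^(S-1) * x = (S:ℝ) * x^S := by
  cases S with
  | zero => simp
  | succ k => rw [Nat.succ_sub_one, pow_succ]; ring

theorem stmt_6 (m n : ℕ) (hm : 0 < m) (hn : 0 < n) (B : ℝ) (hB : 0 ≤ B)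
    (f : (Fin n → ℕ) → ℝ) (hf : ∀ X, 0 ≤ f X ∧ f X ≤ B) :
    ∀ p : ℝ, 0 < p →
      Summable (fun X : Fin n → ℕ =>
        f X * ∏ i, Real.exp (-((m : ℝ) * p)) * ((m : ℝ) * p) ^ (X i) /
          (Nat.factorial (X i) : ℝ)) ∧
      Summable (fun X : Fin n → ℕ =>
        f X * (∑ i, ((X i : ℝ) - (m : ℝ) * p)) *
          ∏ i, Real.exp (-((m : ℝ) * p)) * ((m : ℝ) * p) ^ (X i) /
            (Nat.factorial (X i) : ℝ)) ∧
      ∃ D : ℝ,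
        HasDerivAt (fun q : ℝ => ∑' X : Fin n → ℕ,
            f X * ∏ i, Real.exp (-((m : ℝ) * q)) * ((m : ℝ) * q) ^ (X i) /
              (Nat.factorial (X i) : ℝ)) D p ∧
        p * D = ∑' X : Fin n → ℕ,
          f X * (∑ i, ((X i : ℝ) - (m : ℝ) * p)) *
            ∏ i, Real.exp (-((m : ℝ) * p)) * ((m : ℝ) * p) ^ (X i) /
              (Nat.factorial (X i) : ℝ) := by
  intro p hp
  have hm' : (0:ℝ) < m := by exact_mod_cast hm
  have hn' : (0:ℝ) < n := by exact_mod_cast hn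
  have hmp : (0:ℝ) < (m:ℝ) * p := mul_pos hm' hp
  have hfactpos : ∀ X : Fin n → ℕ, (0:ℝ) < ∏ i, (Nat.factorial (X i) : ℝ) :=
    fun X => Finset.prod_pos fun i _ => by exact_mod_cast (X i).factorial_pos
  have hexple : ∀ q : ℝ, 0 < q → Real.exp (-((m:ℝ)*q)) ≤ 1 :=
    fun q hq => Real.exp_le_one_iff.mpr (by nlinarith)
  -- pointwise bound of the weight product
  have hWle : ∀ q : ℝ, 0 < q → ∀ X : Fin n → ℕ,
      ∏ i, Real.exp (-((m:ℝ)*q)) * ((m:ℝ)*q) ^ (X i) / (Nat.factorial (X i) : ℝ)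
        ≤ ∏ i, ((m:ℝ)*q) ^ (X i) / (Nat.factorial (X i) : ℝ) := by
    intro q hq X
    refine Finset.prod_le_prod (fun i _ => by positivity) (fun i _ => ?_)
    have h1 : Real.exp (-((m:ℝ)*q)) ≤ 1 := hexple q hq
    have h2 : (0:ℝ) ≤ ((m:ℝ)*q) ^ (X i) / (Nat.factorial (X i) : ℝ) := by positivity
    calc Real.exp (-((m:ℝ)*q)) * ((m:ℝ)*q) ^ (X i) / (Nat.factorial (X i) : ℝ)
        = Real.exp (-((m:ℝ)*q)) * (((m:ℝ)*q) ^ (X i) / (Nat.factorial (X i) : ℝ)) := by ring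
      _ ≤ 1 * (((m:ℝ)*q) ^ (X i) / (Nat.factorial (X i) : ℝ)) :=
          mul_le_mul_of_nonneg_right h1 h2
      _ = ((m:ℝ)*q) ^ (X i) / (Nat.factorial (X i) : ℝ) := one_mul _
  have hWnn : ∀ q : ℝ, 0 < q → ∀ X : Fin n → ℕ,
      (0:ℝ) ≤ ∏ i, Real.exp (-((m:ℝ)*q)) * ((m:ℝ)*q) ^ (X i) / (Nat.factorial (X i) : ℝ) := by
    intro q hq X
    have hmq : (0:ℝ) < (m:ℝ)*q := mul_pos hm' hq
    exact Finset.prod_nonneg fun i _ => by positivity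
  -- Summability of the base series at any positive q
  have hsum1 : ∀ q : ℝ, 0 < q → Summable (fun X : Fin n → ℕ =>
      f X * ∏ i, Real.exp (-((m:ℝ)*q)) * ((m:ℝ)*q) ^ (X i) / (Nat.factorial (X i) : ℝ)) := by
    intro q hq
    have hdom : Summable (fun X : Fin n → ℕ =>
        B * ∏ i, ((m:ℝ)*q) ^ (X i) / (Nat.factorial (X i) : ℝ)) := by
      refine Summable.mul_left _ ?_
      have := aux_pi_summable n (fun k => ((m:ℝ)*q) ^ k / (Nat.factorial k : ℝ))
        (fun k => by have := mul_pos hm' hq; positivity)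
        (Real.summable_pow_div_factorial ((m:ℝ)*q))
      exact this
    refine Summable.of_nonneg_of_le (fun X => mul_nonneg (hf X).1 (hWnn q hq X)) (fun X => ?_) hdom
    have hprodnn : (0:ℝ) ≤ ∏ i, ((m:ℝ)*q) ^ (X i) / (Nat.factorial (X i) : ℝ) := by
      have hmq : (0:ℝ) < (m:ℝ)*q := mul_pos hm' hq
      exact Finset.prod_nonneg fun i _ => by positivity
    exact mul_le_mul (hf X).2 (hWle q hq X) (hWnn q hq X) hB
  -- Summability of the second series
  have hsum2 : Summable (fun X : Fin n → ℕ =>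
      f X * (∑ i, ((X i : ℝ) - (m:ℝ)*p)) *
        ∏ i, Real.exp (-((m:ℝ)*p)) * ((m:ℝ)*p) ^ (X i) / (Nat.factorial (X i) : ℝ)) := by
    have hdom : Summable (fun X : Fin n → ℕ =>
        B * (((∑ i, (X i : ℝ)) + (n:ℝ)*((m:ℝ)*p)) *
          ∏ i, ((m:ℝ)*p) ^ (X i) / (Nat.factorial (X i) : ℝ))) :=
      (aux_masterS n ((m:ℝ)*p) ((n:ℝ)*((m:ℝ)*p)) hmp (by positivity)).mul_left B
    refine Summable.of_norm_bounded hdom (fun X => ?_)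
    have hprodnn : (0:ℝ) ≤ ∏ i, ((m:ℝ)*p) ^ (X i) / (Nat.factorial (X i) : ℝ) :=
      Finset.prod_nonneg fun i _ => by positivity
    have hsumabs : |∑ i, ((X i : ℝ) - (m:ℝ)*p)| ≤ (∑ i, (X i : ℝ)) + (n:ℝ)*((m:ℝ)*p) := by
      calc |∑ i, ((X i : ℝ) - (m:ℝ)*p)| ≤ ∑ i, |(X i : ℝ) - (m:ℝ)*p| :=
            Finset.abs_sum_le_sum_abs _ _
        _ ≤ ∑ i, ((X i : ℝ) + (m:ℝ)*p) := by
            refine Finset.sum_le_sum fun i _ => ?_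
            have h1 : |(X i : ℝ) - (m:ℝ)*p| ≤ |(X i : ℝ)| + |(m:ℝ)*p| := abs_sub _ _
            have h2 : |(X i : ℝ)| = (X i : ℝ) := abs_of_nonneg (by positivity)
            have h3 : |(m:ℝ)*p| = (m:ℝ)*p := abs_of_nonneg hmp.le
            linarith
        _ = (∑ i, (X i : ℝ)) + (n:ℝ)*((m:ℝ)*p) := by
            rw [Finset.sum_add_distrib, Finset.sum_const, Finset.card_univ, Fintype.card_fin,
              nsmul_eq_mul]
    rw [Real.norm_eq_abs, abs_mul, abs_mul]
    have h4 : |f X| = f X := abs_of_nonneg (hf X).1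
    have h5 : |∏ i, Real.exp (-((m:ℝ)*p)) * ((m:ℝ)*p) ^ (X i) / (Nat.factorial (X i) : ℝ)|
        = ∏ i, Real.exp (-((m:ℝ)*p)) * ((m:ℝ)*p) ^ (X i) / (Nat.factorial (X i) : ℝ) :=
      abs_of_nonneg (hWnn p hp X)
    rw [h4, h5]
    calc f X * |∑ i, ((X i : ℝ) - (m:ℝ)*p)| *
          ∏ i, Real.exp (-((m:ℝ)*p)) * ((m:ℝ)*p) ^ (X i) / (Nat.factorial (X i) : ℝ)
        ≤ B * ((∑ i, (X i : ℝ)) + (n:ℝ)*((m:ℝ)*p)) *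
          ∏ i, ((m:ℝ)*p) ^ (X i) / (Nat.factorial (X i) : ℝ) := by
          refine mul_le_mul ?_ (hWle p hp X) (hWnn p hp X) ?_
          · exact mul_le_mul (hf X).2 hsumabs (abs_nonneg _) hB
          · positivity
      _ = B * (((∑ i, (X i : ℝ)) + (n:ℝ)*((m:ℝ)*p)) *
          ∏ i, ((m:ℝ)*p) ^ (X i) / (Nat.factorial (X i) : ℝ)) := by ring
  -- derivative part
  have hpmem : p ∈ Set.Ioo (p/2) (2*p) := ⟨by linarith, by linarith⟩
  have hu : Summable (fun X : Fin n → ℕ =>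
      B/(2*p) * (((∑ i, (X i : ℝ)) + 2*p*((n:ℝ)*(m:ℝ))) *
        ∏ i, (2*((m:ℝ)*p)) ^ (X i) / (Nat.factorial (X i) : ℝ))) :=
    (aux_masterS n (2*((m:ℝ)*p)) (2*p*((n:ℝ)*(m:ℝ))) (by positivity) (by positivity)).mul_left _
  have hGd : ∀ (X : Fin n → ℕ) (q : ℝ), q ∈ Set.Ioo (p/2) (2*p) →
      HasDerivAt (fun q : ℝ => f X * ∏ i, Real.exp (-((m:ℝ)*q)) * ((m:ℝ)*q) ^ (X i) /
          (Nat.factorial (X i) : ℝ))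
        ((f X * (m:ℝ)^(∑ i, X i) / ∏ i, (Nat.factorial (X i) : ℝ)) *
          ((Real.exp (-((n:ℝ)*(m:ℝ)*q)) * -((n:ℝ)*(m:ℝ))) * q ^ (∑ i, X i) +
            Real.exp (-((n:ℝ)*(m:ℝ)*q)) * (((∑ i, X i : ℕ) : ℝ) * q ^ ((∑ i, X i) - 1)))) q := by
    intro X q _
    have hfun : (fun q : ℝ => f X * ∏ i, Real.exp (-((m:ℝ)*q)) * ((m:ℝ)*q) ^ (X i) /
        (Nat.factorial (X i) : ℝ))
        = fun q : ℝ => (f X * (m:ℝ)^(∑ i, X i) / ∏ i, (Nat.factorial (X i) : ℝ)) *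
            (Real.exp (-((n:ℝ)*(m:ℝ)*q)) * q ^ (∑ i, X i)) := by
      funext q
      rw [aux_prod_eq n m q X]
      ring
    rw [hfun]
    have h1 : HasDerivAt (fun q : ℝ => -((n:ℝ)*(m:ℝ)*q)) (-((n:ℝ)*(m:ℝ))) q := by
      have h := ((hasDerivAt_id q).const_mul ((n:ℝ)*(m:ℝ))).neg
      simp only [id, mul_one] at h
      exact h
    exact ((h1.exp).mul (hasDerivAt_pow (∑ i, X i) q)).const_mul _
  have hbound : ∀ (X : Fin n → ℕ) (q : ℝ), q ∈ Set.Ioo (p/2) (2*p) →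
      ‖(f X * (m:ℝ)^(∑ i, X i) / ∏ i, (Nat.factorial (X i) : ℝ)) *
          ((Real.exp (-((n:ℝ)*(m:ℝ)*q)) * -((n:ℝ)*(m:ℝ))) * q ^ (∑ i, X i) +
            Real.exp (-((n:ℝ)*(m:ℝ)*q)) * (((∑ i, X i : ℕ) : ℝ) * q ^ ((∑ i, X i) - 1)))‖
        ≤ B/(2*p) * (((∑ i, (X i : ℝ)) + 2*p*((n:ℝ)*(m:ℝ))) *
            ∏ i, (2*((m:ℝ)*p)) ^ (X i) / (Nat.factorial (X i) : ℝ)) := by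
    intro X q hq
    obtain ⟨hq1, hq2⟩ := hq
    have hq0 : (0:ℝ) < q := by linarith
    rw [aux_prod2 n (2*((m:ℝ)*p)) X]
    have hcast : (∑ i, (X i : ℝ)) = ((∑ i, X i : ℕ) : ℝ) := by push_cast; rfl
    rw [hcast]
    generalize (∑ i, X i : ℕ) = S
    have hF : (0:ℝ) < ∏ i, (Nat.factorial (X i) : ℝ) := hfactpos X
    have he0 : (0:ℝ) < Real.exp (-((n:ℝ)*(m:ℝ)*q)) := Real.exp_pos _
    have he1 : Real.exp (-((n:ℝ)*(m:ℝ)*q)) ≤ 1 := by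
      refine Real.exp_le_one_iff.mpr ?_
      have : (0:ℝ) ≤ (n:ℝ)*(m:ℝ)*q := by positivity
      linarith
    have hqS : q ^ S ≤ (2*p) ^ S := pow_le_pow_left₀ hq0.le (by linarith) S
    have hqS1 : q ^ (S-1) ≤ (2*p) ^ (S-1) := pow_le_pow_left₀ hq0.le (by linarith) _
    have hqSnn : (0:ℝ) ≤ q ^ S := by positivity
    have hqS1nn : (0:ℝ) ≤ q ^ (S-1) := by positivity
    have hnm : (0:ℝ) ≤ (n:ℝ)*(m:ℝ) := by positivity
    -- bound the derivative factor
    have hE : |(Real.exp (-((n:ℝ)*(m:ℝ)*q)) * -((n:ℝ)*(m:ℝ))) * q ^ S +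
          Real.exp (-((n:ℝ)*(m:ℝ)*q)) * ((S:ℝ) * q ^ (S-1))|
        ≤ (n:ℝ)*(m:ℝ) * (2*p) ^ S + (S:ℝ) * (2*p) ^ (S-1) := by
      refine (abs_add_le _ _).trans ?_
      have h4 : |(Real.exp (-((n:ℝ)*(m:ℝ)*q)) * -((n:ℝ)*(m:ℝ))) * q ^ S|
          ≤ (n:ℝ)*(m:ℝ) * (2*p) ^ S := by
        rw [abs_mul, abs_mul, abs_neg, abs_of_pos he0, abs_of_nonneg hnm, abs_of_nonneg hqSnn]
        calc Real.exp (-((n:ℝ)*(m:ℝ)*q)) * ((n:ℝ)*(m:ℝ)) * q ^ S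
            ≤ 1 * ((n:ℝ)*(m:ℝ)) * (2*p) ^ S := by
              refine mul_le_mul (mul_le_mul he1 le_rfl hnm zero_le_one) hqS hqSnn (by positivity)
          _ = (n:ℝ)*(m:ℝ) * (2*p) ^ S := by ring
      have h5 : |Real.exp (-((n:ℝ)*(m:ℝ)*q)) * ((S:ℝ) * q ^ (S-1))| ≤ (S:ℝ) * (2*p) ^ (S-1) := by
        rw [abs_mul, abs_mul, abs_of_pos he0, abs_of_nonneg (by positivity : (0:ℝ) ≤ (S:ℝ)),
          abs_of_nonneg hqS1nn]
        calc Real.exp (-((n:ℝ)*(m:ℝ)*q)) * ((S:ℝ) * q ^ (S-1))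
            ≤ 1 * ((S:ℝ) * (2*p) ^ (S-1)) := by
              refine mul_le_mul he1 (mul_le_mul_of_nonneg_left hqS1 (by positivity)) (by positivity)
                zero_le_one
          _ = (S:ℝ) * (2*p) ^ (S-1) := one_mul _
      linarith
    have hcXnn : (0:ℝ) ≤ f X * (m:ℝ)^S / ∏ i, (Nat.factorial (X i) : ℝ) :=
      div_nonneg (mul_nonneg (hf X).1 (by positivity)) hF.le
    rw [Real.norm_eq_abs, abs_mul, abs_of_nonneg hcXnn]
    calc (f X * (m:ℝ)^S / ∏ i, (Nat.factorial (X i) : ℝ)) *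
          |(Real.exp (-((n:ℝ)*(m:ℝ)*q)) * -((n:ℝ)*(m:ℝ))) * q ^ S +
            Real.exp (-((n:ℝ)*(m:ℝ)*q)) * ((S:ℝ) * q ^ (S-1))|
        ≤ (B * (m:ℝ)^S / ∏ i, (Nat.factorial (X i) : ℝ)) *
            ((n:ℝ)*(m:ℝ) * (2*p) ^ S + (S:ℝ) * (2*p) ^ (S-1)) := by
          refine mul_le_mul ?_ hE (abs_nonneg _) ?_
          · gcongr
            exact (hf X).2
          · positivity
      _ = B/(2*p) * (((S:ℝ) + 2*p*((n:ℝ)*(m:ℝ))) *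
            ((2*((m:ℝ)*p)) ^ S / ∏ i, (Nat.factorial (X i) : ℝ))) := by
          cases S with
          | zero => field_simp; ring
          | succ k =>
            rw [Nat.succ_sub_one]
            push_cast
            field_simp
            ring
  have key : HasDerivAt (fun q : ℝ => ∑' X : Fin n → ℕ,
      f X * ∏ i, Real.exp (-((m : ℝ) * q)) * ((m : ℝ) * q) ^ (X i) /
        (Nat.factorial (X i) : ℝ))
      (∑' X : Fin n → ℕ,
        (f X * (m:ℝ)^(∑ i, X i) / ∏ i, (Nat.factorial (X i) : ℝ)) *
          ((Real.exp (-((n:ℝ)*(m:ℝ)*p)) * -((n:ℝ)*(m:ℝ))) * p ^ (∑ i, X i) +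
            Real.exp (-((n:ℝ)*(m:ℝ)*p)) * (((∑ i, X i : ℕ) : ℝ) * p ^ ((∑ i, X i) - 1)))) p :=
    hasDerivAt_tsum_of_isPreconnected hu isOpen_Ioo isPreconnected_Ioo hGd hbound
      hpmem (hsum1 p hp) hpmem
  refine ⟨hsum1 p hp, hsum2, _, key, ?_⟩
  rw [← tsum_mul_left]
  refine tsum_congr fun X => ?_
  rw [aux_prod_eq n m p X]
  have hsum_eq : ∑ i, ((X i : ℝ) - (m:ℝ)*p) = ((∑ i, X i : ℕ) : ℝ) - (n:ℝ)*((m:ℝ)*p) := by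
    rw [Finset.sum_sub_distrib, Finset.sum_const, Finset.card_univ, Fintype.card_fin,
      nsmul_eq_mul]
    push_cast
    ring
  rw [hsum_eq]
  have hF : (∏ i, (Nat.factorial (X i) : ℝ)) ≠ 0 := (hfactpos X).ne'
  generalize (∑ i, X i : ℕ) = S
  cases S with
  | zero => field_simp; ring_nf
  | succ k =>
    rw [Nat.succ_sub_one]
    push_cast
    field_simp
    ring
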